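/- For every n ≥ 1, the phase-flipped GHZ state is an eigenvector of the MABK operator with eigenvalue −2^(n−1): M_n.mulVec GHZ'_n = (−2^(n−1) : ℂ) • GHZ'_n. -/

import Mathlib

open Matrix BigOperators

noncomputable section

/-- Pauli X matrix. -/
def pauliX : Matrix (Fin 2) (Fin 2) ℂ := !![0, 1; 1, 0]

/-- Pauli Y matrix. -/
def pauliY : Matrix (Fin 2) (Fin 2) ℂ := !![0, -Complex.I; Complex.I, 0]

/-- n-fold tensor (Kronecker) product of a family of 2×2 matrices,
defined entrywise by `T(A) f g = ∏ j, (A j) (f j) (g j)`. -/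
def tensor {n : ℕ} (A : Fin n → Matrix (Fin 2) (Fin 2) ℂ) :
    Matrix (Fin n → Fin 2) (Fin n → Fin 2) ℂ :=
  Matrix.of fun f g => ∏ j, A j (f j) (g j)

/-- The n-partite MABK operator
`M_n = (1/(2i)) (⊗ⱼ (X + iY) − ⊗ⱼ (X − iY))`. -/
def MABK (n : ℕ) : Matrix (Fin n → Fin 2) (Fin n → Fin 2) ℂ :=
  (1 / (2 * Complex.I)) •
    (tensor (fun _ : Fin n => pauliX + Complex.I • pauliY)
      - tensor (fun _ : Fin n => pauliX - Complex.I • pauliY))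

/-- The n-qubit GHZ state `(|0…0⟩ + i|1…1⟩)/√2`. -/
def GHZ (n : ℕ) : (Fin n → Fin 2) → ℂ :=
  fun f =>
    if f = fun _ => 0 then 1 / (Real.sqrt 2 : ℂ)
    else if f = fun _ => 1 then Complex.I / (Real.sqrt 2 : ℂ)
    else 0

/-- The phase-flipped n-qubit GHZ state `(|0…0⟩ − i|1…1⟩)/√2`. -/
def GHZ' (n : ℕ) : (Fin n → Fin 2) → ℂ :=
  fun f =>
    if f = fun _ => 0 then 1 / (Real.sqrt 2 : ℂ)
    else if f = fun _ => 1 then -Complex.I / (Real.sqrt 2 : ℂ)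
    else 0

lemma entryP (a b : Fin 2) : (pauliX + Complex.I • pauliY) a b
    = if a = 0 ∧ b = 1 then 2 else 0 := by
  fin_cases a <;> fin_cases b <;>
    simp [pauliX, pauliY, Complex.I_mul_I] <;> ring_nf <;>
    simp [Complex.I_sq]

lemma entryM (a b : Fin 2) : (pauliX - Complex.I • pauliY) a b
    = if a = 1 ∧ b = 0 then 2 else 0 := by
  fin_cases a <;> fin_cases b <;>
    simp [pauliX, pauliY, Complex.I_mul_I] <;> ring_nf <;>
    simp [Complex.I_sq]

/-- The phase-flipped GHZ state is an eigenvector of the MABK operator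
with eigenvalue −2^(n−1). -/
theorem mabk_ghz'_eigen (n : ℕ) (hn : 1 ≤ n) :
    (MABK n).mulVec (GHZ' n) = (-(2 ^ (n - 1)) : ℂ) • GHZ' n := by
  set c0 : Fin n → Fin 2 := fun _ => 0 with hc0
  set c1 : Fin n → Fin 2 := fun _ => 1 with hc1
  have hne : c0 ≠ c1 := by
    intro h
    have := congrFun h ⟨0, hn⟩
    simp [hc0, hc1] at this
  have hT1 : ∀ f g, tensor (fun _ : Fin n => pauliX + Complex.I • pauliY) f g
      = if f = c0 ∧ g = c1 then (2:ℂ)^n else 0 := by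
    intro f g
    simp only [tensor, Matrix.of_apply, entryP]
    by_cases h : f = c0 ∧ g = c1
    · obtain ⟨h1, h2⟩ := h
      subst h1; subst h2
      simp [hc0, hc1]
    · rw [if_neg h]
      have : ∃ j : Fin n, ¬(f j = 0 ∧ g j = 1) := by
        by_contra hc
        push_neg at hc
        exact h ⟨funext fun j => (hc j).1, funext fun j => (hc j).2⟩
      obtain ⟨j, hj⟩ := this
      exact Finset.prod_eq_zero (Finset.mem_univ j) (if_neg hj)
  have hT2 : ∀ f g, tensor (fun _ : Fin n => pauliX - Complex.I • pauliY) f g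
      = if f = c1 ∧ g = c0 then (2:ℂ)^n else 0 := by
    intro f g
    simp only [tensor, Matrix.of_apply, entryM]
    by_cases h : f = c1 ∧ g = c0
    · obtain ⟨h1, h2⟩ := h
      subst h1; subst h2
      simp [hc0, hc1]
    · rw [if_neg h]
      have : ∃ j : Fin n, ¬(f j = 1 ∧ g j = 0) := by
        by_contra hc
        push_neg at hc
        exact h ⟨funext fun j => (hc j).1, funext fun j => (hc j).2⟩
      obtain ⟨j, hj⟩ := this
      exact Finset.prod_eq_zero (Finset.mem_univ j) (if_neg hj)
  funext f
  have expand : (MABK n).mulVec (GHZ' n) f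
      = ∑ g, (1 / (2 * Complex.I)) *
          ((if f = c0 ∧ g = c1 then (2:ℂ)^n else 0)
            - (if f = c1 ∧ g = c0 then (2:ℂ)^n else 0)) * GHZ' n g := by
    simp [MABK, mulVec, dotProduct, hT1, hT2, mul_comm]
  rw [expand]
  have key : ∀ g : Fin n → Fin 2,
      (1 / (2 * Complex.I)) *
          ((if f = c0 ∧ g = c1 then (2:ℂ)^n else 0)
            - (if f = c1 ∧ g = c0 then (2:ℂ)^n else 0)) * GHZ' n g
      = (if g = c1 then (1 / (2 * Complex.I)) * (if f = c0 then (2:ℂ)^n else 0) * GHZ' n c1 else 0)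
        + (if g = c0 then (1 / (2 * Complex.I)) * (-(if f = c1 then (2:ℂ)^n else 0)) * GHZ' n c0 else 0) := by
    intro g
    by_cases h1 : g = c1
    · subst h1
      simp [hne, Ne.symm hne]
    · by_cases h0 : g = c0
      · subst h0
        simp [hne, Ne.symm hne, h1]
      · simp [h1, h0]
  rw [Finset.sum_congr rfl (fun g _ => key g), Finset.sum_add_distrib,
    Finset.sum_ite_eq' Finset.univ c1, Finset.sum_ite_eq' Finset.univ c0]
  simp only [Finset.mem_univ, if_true]
  have h2n : (2:ℂ)^n = 2 * 2^(n-1) := by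
    rw [← pow_succ']
    congr 1
    omega
  have hG0 : GHZ' n c0 = 1 / (Real.sqrt 2 : ℂ) := by simp [GHZ', hc0]
  have hG1 : GHZ' n c1 = -Complex.I / (Real.sqrt 2 : ℂ) := by
    simp only [GHZ']; rw [if_neg (Ne.symm hne), if_pos rfl]
  by_cases hf0 : f = c0
  · subst hf0
    rw [if_pos rfl, if_neg hne, hG1, Pi.smul_apply, smul_eq_mul, hG0, h2n]
    field_simp
    ring_nf
  · by_cases hf1 : f = c1
    · subst hf1
      rw [if_neg (Ne.symm hne), if_pos rfl, hG0, Pi.smul_apply, smul_eq_mul, hG1, h2n]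
      field_simp
      ring_nf
      simp [Complex.I_sq]
    · have hGf : GHZ' n f = 0 := by simp only [GHZ']; rw [if_neg hf0, if_neg hf1]
      rw [if_neg hf0, if_neg hf1, Pi.smul_apply, smul_eq_mul, hGf]
      ring
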